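/- For a (p,q)-clan γ (a partial matching on p+q nodes whose unmatched nodes are signed + or −, with #(+) − #(−) = p − q), the length ℓ(γ) := Σ_{(i,j)-matchings} (j − i) − #{crossings of γ} is a nonnegative integer. -/

import Mathlib

open scoped Classical
namespace ClanPaper

/-- A `(p,q)`-clan: a partial matching on `n = p+q` linearly ordered nodes,
given by the involution `m` (whose fixed points are the unmatched nodes),
with unmatched nodes signed `+` (`true`) or `-` (`false`), such that
`#(+) - #(-) = p - q`.  Signs at matched nodes are normalized to `false`. -/
structure Clan (p q : ℕ) where
  m : Fin (p + q) → Fin (p + q)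
  invol : ∀ i, m (m i) = i
  sign : Fin (p + q) → Bool
  signMatched : ∀ i, m i ≠ i → sign i = false
  balance :
    (Finset.univ.filter fun i => m i = i ∧ sign i = true).card + q =
      (Finset.univ.filter fun i => m i = i ∧ sign i = false).card + p

namespace Clan

variable {p q : ℕ}

/-- `Σ_{(i,j)-matchings, i<j} (j - i)` for the partial matching given by an
involution `m`. -/
noncomputable def arcSumAux {n : ℕ} (m : Fin n → Fin n) : ℕ :=
  ∑ i ∈ Finset.univ.filter (fun i => i < m i), ((m i : ℕ) - (i : ℕ))

/-- The number of crossings: pairs of matchings `(i,j)`, `(k,l)` with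
`i < k < j < l`. -/
noncomputable def crossingsAux {n : ℕ} (m : Fin n → Fin n) : ℕ :=
  (Finset.univ.filter fun x : Fin n × Fin n =>
    x.1 < m x.1 ∧ x.2 < m x.2 ∧ x.1 < x.2 ∧ x.2 < m x.1 ∧ m x.1 < m x.2).card

/-- `ℓ := Σ_{(i,j)-matchings} (j-i) - #crossings`, at the level of raw data. -/
noncomputable def lenAux {n : ℕ} (m : Fin n → Fin n) : ℤ :=
  (arcSumAux m : ℤ) - (crossingsAux m : ℤ)

/-- The length `ℓ(γ)` of a clan. -/
noncomputable def len (γ : Clan p q) : ℤ := lenAux γ.m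

/-- Node `i` is an unmatched `-` or a left endpoint of a matching
(these get the labels `1,…,q` in the definition of `u_γ`). -/
def IsMinusOrLeft (γ : Clan p q) (i : Fin (p + q)) : Prop :=
  (γ.m i = i ∧ γ.sign i = false) ∨ i < γ.m i

/-- Node `i` is an unmatched `+` or a left endpoint of a matching
(these get the labels `1,…,p` in the definition of `v_γ`). -/
def IsPlusOrLeft (γ : Clan p q) (i : Fin (p + q)) : Prop :=
  (γ.m i = i ∧ γ.sign i = true) ∨ i < γ.m i

/-- `u_γ` as a `ℕ`-valued labelling (with values in `1,…,n`): the `-`s and the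
left endpoints get the labels `1,…,q` from left to right, the `+`s and the
right endpoints get the labels `q+1,…,n` from left to right. -/
noncomputable def uFun (γ : Clan p q) (i : Fin (p + q)) : ℕ :=
  if γ.IsMinusOrLeft i then
    1 + (Finset.univ.filter fun j => γ.IsMinusOrLeft j ∧ j < i).card
  else
    q + 1 + (Finset.univ.filter fun j => ¬ γ.IsMinusOrLeft j ∧ j < i).card

/-- `v_γ` as a `ℕ`-valued labelling (with values in `1,…,n`): the `+`s and the
left endpoints get the labels `1,…,p` from left to right, the `-`s and the
right endpoints get the labels `p+1,…,n` from left to right. -/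
noncomputable def vFun (γ : Clan p q) (i : Fin (p + q)) : ℕ :=
  if γ.IsPlusOrLeft i then
    1 + (Finset.univ.filter fun j => γ.IsPlusOrLeft j ∧ j < i).card
  else
    p + 1 + (Finset.univ.filter fun j => ¬ γ.IsPlusOrLeft j ∧ j < i).card

/-- The transposition of `i` and `i'`, as a function. -/
def swapFun {n : ℕ} (i i' : Fin n) : Fin n → Fin n :=
  fun x => if x = i then i' else if x = i' then i else x

/-- Nodes `i`, `i'` are both unmatched and carry opposite signs. -/
def Opp (γ : Clan p q) (i i' : Fin (p + q)) : Prop :=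
  γ.m i = i ∧ γ.m i' = i' ∧ γ.sign i ≠ γ.sign i'

/-- `HeckeSpec γ i i' γ'` (for `i' = i+1`) says `γ' = s_i * γ` for the `0`-Hecke
action: if nodes `i`, `i'` carry opposite signs, they are replaced by a matching
between them; otherwise the two nodes are swapped if this increases the length,
and nothing happens if not. -/
def HeckeSpec (γ : Clan p q) (i i' : Fin (p + q)) (γ' : Clan p q) : Prop :=
  (γ.Opp i i' ∧
    (∀ x, γ'.m x = if x = i then i' else if x = i' then i else γ.m x) ∧
    (∀ x, γ'.sign x = if x = i ∨ x = i' then false else γ.sign x)) ∨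
  (¬ γ.Opp i i' ∧
    lenAux γ.m < lenAux (swapFun i i' ∘ γ.m ∘ swapFun i i') ∧
    (∀ x, γ'.m x = swapFun i i' (γ.m (swapFun i i' x))) ∧
    (∀ x, γ'.sign x = γ.sign (swapFun i i' x))) ∨
  (¬ γ.Opp i i' ∧
    ¬ lenAux γ.m < lenAux (swapFun i i' ∘ γ.m ∘ swapFun i i') ∧ γ' = γ)

end Clan
end ClanPaper

open ClanPaper in
/-- For a `(p,q)`-clan `γ`, the length
`ℓ(γ) = Σ_{(i,j)-matchings} (j-i) - #crossings` is a nonnegative integer. -/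
lemma crossings_le_arcSum {n : ℕ} (m : Fin n → Fin n) :
    Clan.crossingsAux m ≤ Clan.arcSumAux m := by
  classical
  unfold Clan.crossingsAux Clan.arcSumAux
  rw [Finset.card_eq_sum_card_fiberwise (f := Prod.fst)
    (t := Finset.univ.filter fun i => i < m i)
    (fun x hx => by
      simp only [Finset.mem_coe, Finset.mem_filter, Finset.mem_univ, true_and] at hx ⊢
      exact hx.1)]
  refine Finset.sum_le_sum fun i hi => ?_
  have h1 : ((Finset.univ.filter fun x : Fin n × Fin n =>
      x.1 < m x.1 ∧ x.2 < m x.2 ∧ x.1 < x.2 ∧ x.2 < m x.1 ∧ m x.1 < m x.2).filter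
      (fun x => x.1 = i)).card ≤ (Finset.Ioo i (m i)).card := by
    refine Finset.card_le_card_of_injOn Prod.snd ?_ ?_
    · intro x hx
      simp only [Finset.mem_coe, Finset.mem_filter, Finset.mem_univ, true_and] at hx ⊢
      obtain ⟨⟨_, _, h3, h4, _⟩, h6⟩ := hx
      rw [Finset.mem_Ioo]
      exact ⟨h6 ▸ h3, h6 ▸ h4⟩
    · intro x hx y hy hxy
      simp only [Finset.mem_coe, Finset.mem_filter] at hx hy
      exact Prod.ext (hx.2.trans hy.2.symm) hxy
  refine h1.trans ?_
  have : (Finset.Ioo i (m i)).card = (m i : ℕ) - (i : ℕ) - 1 := Fin.card_Ioo i (m i)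
  omega

open ClanPaper in
/-- For a `(p,q)`-clan `γ`, the length
`ℓ(γ) = Σ_{(i,j)-matchings} (j-i) - #crossings` is a nonnegative integer. -/
theorem clan_len_nonneg {p q : ℕ} (γ : Clan p q) : 0 ≤ γ.len := by
  have h := crossings_le_arcSum γ.m
  unfold Clan.len Clan.lenAux
  omega
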